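/- If w ∈ F(X) is quasi-positive with |Θ(w)| = k (sum of coordinates of the abelianization), then w admits a factorization w = x_{i_1}^{c_1}⋯x_{i_k}^{c_k} in which each conjugator satisfies |c_j| ≤ (|w| − k)/2, where |w| denotes the length of the reduced word w. -/

import Mathlib

/-- Quasi-positive: a (possibly empty) product of conjugates of generators. -/
def QuasiPositive {X : Type*} (w : FreeGroup X) : Prop :=
  ∃ l : List (X × FreeGroup X),
    w = (l.map fun p => p.2⁻¹ * FreeGroup.of p.1 * p.2).prod

/-- The abelianization map `Θ : F(X) → ℤ^X`. -/
noncomputable def Theta {X : Type*} [DecidableEq X] :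
    FreeGroup X →* Multiplicative (X → ℤ) :=
  FreeGroup.lift fun x => Multiplicative.ofAdd (Pi.single x 1)

namespace QP
open FreeGroup List

set_option linter.unusedSectionVars false

variable {α : Type*} [DecidableEq α]

/-- A word is reduced: no adjacent cancelling pair. -/
def IsRed (L : List (α × Bool)) : Prop :=
  List.Chain' (fun a b => ¬ (a.1 = b.1 ∧ a.2 = !b.2)) L

lemma isRed_nil : IsRed ([] : List (α × Bool)) := List.isChain_nil

lemma isRed_reduce (L : List (α × Bool)) : IsRed (reduce L) := by
  induction L with
  | nil => exact List.isChain_nil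
  | cons a L ih =>
    rw [FreeGroup.reduce.cons]
    rcases h : reduce L with _ | ⟨b, t⟩
    · exact List.isChain_singleton _
    · rw [h] at ih
      by_cases hc : a.1 = b.1 ∧ a.2 = !b.2
      · simp only [if_pos hc]
        exact ih.tail
      · simp only [if_neg hc]
        exact ih.cons (fun y hy => by rw [List.head?_cons, Option.mem_some_iff] at hy; subst hy; exact hc)

lemma reduce_eq_self {L : List (α × Bool)} (h : IsRed L) : reduce L = L := by
  induction L with
  | nil => rfl
  | cons a L ih =>
    have hL : IsRed L := h.tail
    rw [FreeGroup.reduce.cons, ih hL]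
    rcases hL2 : L with _ | ⟨b, t⟩
    · rfl
    · have hab : ¬ (a.1 = b.1 ∧ a.2 = !b.2) := by
        rw [hL2] at h
        exact (List.isChain_cons_cons.1 h).1
      simp [if_neg hab]

lemma toWord_mk_isRed {L : List (α × Bool)} (h : IsRed L) : (mk L).toWord = L := by
  rw [FreeGroup.toWord_mk, reduce_eq_self h]

lemma isRed_toWord (g : FreeGroup α) : IsRed g.toWord := by
  have := FreeGroup.reduce_toWord g
  rw [← this]
  exact isRed_reduce _

lemma norm_eq_toWord_length (g : FreeGroup α) : norm g = g.toWord.length := rfl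

lemma norm_mk_isRed {L : List (α × Bool)} (h : IsRed L) : norm (mk L) = L.length := by
  rw [norm_eq_toWord_length, toWord_mk_isRed h]

lemma isRed_append_left {L₁ L₂ : List (α × Bool)} (h : IsRed (L₁ ++ L₂)) : IsRed L₁ :=
  (List.isChain_append.1 h).1

lemma isRed_append_right {L₁ L₂ : List (α × Bool)} (h : IsRed (L₁ ++ L₂)) : IsRed L₂ :=
  (List.isChain_append.1 h).2.1

lemma invRev_append (L₁ L₂ : List (α × Bool)) :
    invRev (L₁ ++ L₂) = invRev L₂ ++ invRev L₁ := by
  simp [invRev]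

lemma invRev_cons (a : α × Bool) (L : List (α × Bool)) :
    invRev (a :: L) = invRev L ++ [(a.1, !a.2)] := by
  simp [invRev]

lemma invRev_singleton (a : α × Bool) : invRev [a] = [(a.1, !a.2)] := by
  simp [invRev]

lemma isRed_invRev {L : List (α × Bool)} (h : IsRed L) : IsRed (invRev L) := by
  unfold IsRed invRev List.Chain'
  rw [List.isChain_reverse]
  rw [List.isChain_map]
  refine h.imp ?_
  rintro a b hab ⟨h1, h2⟩
  simp only [Bool.not_not] at h2
  exact hab ⟨h1.symm, h2.symm⟩

/-- an `append_split` helper. -/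
lemma append_split {β : Type*} {P V₁ Q V₂ : List β} (h : P ++ V₁ = Q ++ V₂)
    (hl : P.length ≤ Q.length) : ∃ E, Q = P ++ E ∧ V₁ = E ++ V₂ := by
  rcases List.append_eq_append_iff.1 h with ⟨E, h1, h2⟩ | ⟨E, h1, h2⟩
  · exact ⟨E, h1, h2⟩
  · have : E = [] := by
      have := congrArg List.length h1
      simp at this
      have : E.length = 0 := by omega
      exact List.length_eq_zero_iff.1 this
    subst this
    simp at h1 h2
    exact ⟨[], by simp [h1], by simp [h2]⟩

/-- Maximal cancellation between two reduced words. -/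
lemma cancel_lemma : ∀ (n : ℕ) (F V : List (α × Bool)), F.length ≤ n → IsRed F → IsRed V →
    ∃ F₁ r V₁, F = F₁ ++ r ∧ V = invRev r ++ V₁ ∧ IsRed (F₁ ++ V₁) := by
  intro n
  induction n with
  | zero =>
    intro F V hF _ hV
    have : F = [] := List.length_eq_zero_iff.1 (Nat.le_zero.1 hF)
    subst this
    exact ⟨[], [], V, by simp [invRev], by simp [invRev], by simpa using hV⟩
  | succ n ih =>
    intro F V hF hFr hVr
    by_cases hred : IsRed (F ++ V)
    · exact ⟨F, [], V, by simp, by simp [invRev], hred⟩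
    · -- there is a cancelling junction
      have hjunc : ¬ (∀ x ∈ F.getLast?, ∀ y ∈ V.head?, ¬ (x.1 = y.1 ∧ x.2 = !y.2)) := by
        intro hj
        exact hred (List.isChain_append.2 ⟨hFr, hVr, hj⟩)
      push_neg at hjunc
      obtain ⟨x, hx, y, hy, hxy⟩ := hjunc
      have hFne : F ≠ [] := by rintro rfl; simp at hx
      have hVne : V ≠ [] := by rintro rfl; simp at hy
      have hFdec : F.dropLast ++ [x] = F := List.dropLast_append_getLast? x hx
      have hVdec : V = y :: V.tail := by
        rcases V with _ | ⟨v0, vt⟩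
        · simp at hy
        · simp only [List.head?_cons, Option.mem_def, Option.some.injEq] at hy
          rw [hy]
          rfl
      have hF' : IsRed F.dropLast := isRed_append_left (by rwa [hFdec])
      have hV' : IsRed V.tail := by
        have : IsRed (y :: V.tail) := by rwa [← hVdec]
        exact this.tail
      have hlen : F.dropLast.length ≤ n := by
        have h6 := List.length_dropLast (xs := F)
        have h7 : 0 < F.length := List.length_pos_iff.2 hFne
        omega
      obtain ⟨F₁, r, V₁, h1, h2, h3⟩ := ih F.dropLast V.tail hlen hF' hV'
      refine ⟨F₁, r ++ [x], V₁, ?_, ?_, h3⟩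
      · rw [← hFdec, h1, List.append_assoc]
      · rw [invRev_append, invRev_singleton]
        have hyx : y = (x.1, !x.2) := by
          obtain ⟨h4, h5⟩ := hxy
          have : y.2 = !x.2 := by rw [h5, Bool.not_not]
          exact Prod.ext h4.symm this
        rw [hVdec, h2, hyx]
        simp

def pm (l : List (α × FreeGroup α)) : FreeGroup α :=
  (l.map fun p => p.2⁻¹ * FreeGroup.of p.1 * p.2).prod

def mu (l : List (α × FreeGroup α)) : ℕ := (l.map fun p => FreeGroup.norm p.2).sum

lemma pm_nil : pm ([] : List (α × FreeGroup α)) = 1 := rfl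

lemma pm_cons (x : α) (c : FreeGroup α) (t : List (α × FreeGroup α)) :
    pm ((x, c) :: t) = c⁻¹ * of x * c * pm t := by
  unfold pm; rw [List.map_cons, List.prod_cons]

lemma mu_cons (x : α) (c : FreeGroup α) (t : List (α × FreeGroup α)) :
    mu ((x, c) :: t) = FreeGroup.norm c + mu t := by
  unfold mu; rw [List.map_cons, List.sum_cons]

/-- The geodesic chain structure for a quasipositive factorization. -/
def Ch : List (α × FreeGroup α) → FreeGroup α → List (α × Bool) → Prop
  | [], s, W => s = 1 ∧ W = []
  | (x, c) :: t, s, W => ∃ U A W', W = U ++ (x, true) :: (A ++ W') ∧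
      c = (mk U)⁻¹ * s ∧ Ch t ((mk A)⁻¹ * c) W'

lemma ch_s_norm : ∀ (l : List (α × FreeGroup α)) (s : FreeGroup α) (W : List (α × Bool)),
    Ch l s W → (FreeGroup.norm s : ℤ) ≤ W.length - l.length := by
  intro l
  induction l with
  | nil => rintro s W ⟨rfl, rfl⟩; simp
  | cons p t ih =>
    obtain ⟨x, c⟩ := p
    rintro s W ⟨U, A, W', rfl, hc, hch⟩
    have h1 := ih _ _ hch
    have h2 : s = mk U * (mk A * ((mk A)⁻¹ * c)) := by rw [hc]; group
    have h3 : FreeGroup.norm s ≤ U.length + (A.length + FreeGroup.norm ((mk A)⁻¹ * c)) := by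
      calc FreeGroup.norm s ≤ FreeGroup.norm (mk U) + FreeGroup.norm (mk A * ((mk A)⁻¹ * c)) := by
              rw [h2]; exact FreeGroup.norm_mul_le _ _
        _ ≤ U.length + (A.length + FreeGroup.norm ((mk A)⁻¹ * c)) := by
              have := FreeGroup.norm_mul_le (mk A) ((mk A)⁻¹ * c)
              have h4 := FreeGroup.norm_mk_le (L₁ := U)
              have h5 := FreeGroup.norm_mk_le (L₁ := A)
              omega
    simp only [List.length_append, List.length_cons] at h1 ⊢
    push_cast at h1 h3 ⊢
    omega

lemma ch_bound : ∀ (l : List (α × FreeGroup α)) (s : FreeGroup α) (W : List (α × Bool)) (σ : ℤ),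
    Ch l s W → (FreeGroup.norm s : ℤ) ≤ σ →
    ∀ p ∈ l, 2 * (FreeGroup.norm p.2 : ℤ) ≤ σ + W.length - l.length := by
  intro l
  induction l with
  | nil => intro s W σ _ _ p hp; simp at hp
  | cons q t ih =>
    obtain ⟨x, c⟩ := q
    rintro s W σ ⟨U, A, W', rfl, hc, hch⟩ hσ p hp
    rcases List.mem_cons.1 hp with rfl | hp'
    · -- the head
      have h1 : (FreeGroup.norm c : ℤ) ≤ U.length + σ := by
        have : FreeGroup.norm c ≤ FreeGroup.norm (mk U)⁻¹ + FreeGroup.norm s :=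
          hc ▸ FreeGroup.norm_mul_le _ _
        have h4 : FreeGroup.norm (mk U)⁻¹ = FreeGroup.norm (mk U) := FreeGroup.norm_inv_eq
        have h5 := FreeGroup.norm_mk_le (L₁ := U)
        push_cast
        omega
      have h2 : (FreeGroup.norm c : ℤ) ≤ A.length + (W'.length - t.length) := by
        have hs' := ch_s_norm _ _ _ hch
        have : FreeGroup.norm c ≤ FreeGroup.norm (mk A) + FreeGroup.norm ((mk A)⁻¹ * c) := by
          have he : c = mk A * ((mk A)⁻¹ * c) := by group
          nth_rewrite 1 [he]
          exact FreeGroup.norm_mul_le _ _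
        have h5 := FreeGroup.norm_mk_le (L₁ := A)
        push_cast
        omega
      simp only [List.length_append, List.length_cons]
      push_cast
      push_cast at h1 h2
      omega
    · -- the tail
      have hs' : (FreeGroup.norm ((mk A)⁻¹ * c) : ℤ) ≤ σ + U.length + A.length := by
        have h3 : FreeGroup.norm ((mk A)⁻¹ * c)
            ≤ FreeGroup.norm (mk A) + (FreeGroup.norm (mk U) + FreeGroup.norm s) := by
          calc FreeGroup.norm ((mk A)⁻¹ * c) ≤ FreeGroup.norm (mk A)⁻¹ + FreeGroup.norm c :=
                FreeGroup.norm_mul_le _ _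
            _ ≤ FreeGroup.norm (mk A) + (FreeGroup.norm (mk U) + FreeGroup.norm s) := by
                have h4 : FreeGroup.norm c ≤ FreeGroup.norm (mk U)⁻¹ + FreeGroup.norm s :=
                  hc ▸ FreeGroup.norm_mul_le _ _
                have h5 : FreeGroup.norm (mk U)⁻¹ = FreeGroup.norm (mk U) := FreeGroup.norm_inv_eq
                have h6 : FreeGroup.norm (mk A)⁻¹ = FreeGroup.norm (mk A) := FreeGroup.norm_inv_eq
                omega
        have h5 := FreeGroup.norm_mk_le (L₁ := A)
        have h6 := FreeGroup.norm_mk_le (L₁ := U)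
        push_cast
        omega
      have hh := ih _ _ (σ + U.length + A.length) hch hs' p hp'
      simp only [List.length_append, List.length_cons]
      push_cast
      push_cast at hh
      omega
lemma of_eq_mk (y : α) : of y = mk [(y, true)] := rfl

lemma mk_single_false (y : α) : mk [(y, false)] = (of y)⁻¹ := by
  rw [of_eq_mk, inv_mk]
  norm_num [invRev]

lemma conj_single (y : α) (b : Bool) : (mk [(y, b)])⁻¹ * of y * mk [(y, b)] = of y := by
  cases b
  · rw [mk_single_false]; group
  · rw [← of_eq_mk]; group

lemma getLast?_invRev (C : List (α × Bool)) :
    (invRev C).getLast? = C.head?.map (fun p => (p.1, !p.2)) := by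
  cases C with
  | nil => simp [invRev]
  | cons z T => rw [invRev_cons]; simp

lemma mk_F_eq (y : α) (c : FreeGroup α) :
    mk (invRev c.toWord ++ (y, true) :: c.toWord) = c⁻¹ * of y * c := by
  have h1 : (y, true) :: c.toWord = [(y, true)] ++ c.toWord := rfl
  rw [h1, ← mul_mk, ← mul_mk, ← inv_mk, mk_toWord, ← of_eq_mk]
  rw [mul_assoc]

lemma isRed_F {y : α} {c : FreeGroup α} (hhead : ∀ z' ∈ c.toWord.head?, z'.1 ≠ y) :
    IsRed (invRev c.toWord ++ (y, true) :: c.toWord) := by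
  apply List.isChain_append.2
  refine ⟨isRed_invRev (isRed_toWord c), ?_, ?_⟩
  · apply List.isChain_cons.2
    refine ⟨?_, isRed_toWord c⟩
    rintro z' hz' ⟨h1, h2⟩
    exact hhead z' hz' h1.symm
  · intro a ha b hb
    simp only [List.head?_cons, Option.mem_def, Option.some.injEq] at hb
    subst hb
    rw [getLast?_invRev] at ha
    rcases hCw : c.toWord.head? with _ | z'
    · rw [hCw] at ha; simp at ha
    · rw [hCw] at ha
      simp only [Option.map_some, Option.mem_def, Option.some.injEq] at ha
      subst ha
      rintro ⟨h1, h2⟩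
      exact hhead z' (by rw [hCw]; rfl) h1

/-- The main existence lemma: every quasipositive factorization can be replaced by a
geodesic (chain-structured) one. -/
lemma main : ∀ (n : ℕ) (l : List (α × FreeGroup α)), mu l + l.length ≤ n →
    ∃ l', l'.length = l.length ∧ pm l' = pm l ∧ mu l' ≤ mu l ∧ Ch l' 1 (pm l).toWord := by
  intro n
  induction n with
  | zero =>
    intro l hl
    have : l = [] := List.length_eq_zero_iff.1 (by omega)
    subst this
    exact ⟨[], rfl, rfl, le_refl _, rfl, by rw [pm_nil, toWord_one]⟩
  | succ n ih =>
    rintro (_ | ⟨⟨y, c⟩, t⟩) hl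
    · exact ⟨[], rfl, rfl, le_refl _, rfl, by rw [pm_nil, toWord_one]⟩
    by_cases hstrip : ∃ b T, c.toWord = (y, b) :: T
    · -- Step 0 : strip a leading `y^±` from the conjugator
      obtain ⟨b, T, hbT⟩ := hstrip
      set c₂ := mk T with hc₂
      have hcmk : c = mk [(y, b)] * mk T := by
        conv_lhs => rw [← mk_toWord (x := c), hbT]
        rw [mul_mk]; rfl
      have hredT : IsRed ((y, b) :: T) := hbT ▸ isRed_toWord c
      have hconj : c⁻¹ * of y * c = c₂⁻¹ * of y * c₂ := by
        rw [hcmk, ← hc₂]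
        have := conj_single y b
        calc (mk [(y, b)] * c₂)⁻¹ * of y * (mk [(y, b)] * c₂)
            = c₂⁻¹ * ((mk [(y, b)])⁻¹ * of y * mk [(y, b)]) * c₂ := by group
          _ = c₂⁻¹ * of y * c₂ := by rw [this]
      have hnormc : FreeGroup.norm c = T.length + 1 := by
        rw [norm_eq_toWord_length, hbT]; simp
      have hnormc₂ : FreeGroup.norm c₂ = T.length := norm_mk_isRed hredT.tail
      have hpmeq : pm ((y, c₂) :: t) = pm ((y, c) :: t) := by
        rw [pm_cons, pm_cons, hconj]
      have hmeas : mu ((y, c₂) :: t) + ((y, c₂) :: t).length ≤ n := by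
        rw [mu_cons] at hl ⊢
        simp only [List.length_cons] at hl ⊢
        omega
      obtain ⟨l', h1, h2, h3, h4⟩ := ih _ hmeas
      refine ⟨l', by simpa using h1, by rw [h2, hpmeq], ?_, by rwa [hpmeq] at h4⟩
      rw [mu_cons] at h3 ⊢
      omega
    · -- conjugator does not start with `y^±1`
      push_neg at hstrip
      have hhead : ∀ z' ∈ c.toWord.head?, z'.1 ≠ y := by
        intro z' hz' hzy
        rcases hCw : c.toWord with _ | ⟨z0, T⟩
        · rw [hCw] at hz'; simp at hz'
        · rw [hCw] at hz'
          simp only [List.head?_cons, Option.mem_def, Option.some.injEq] at hz'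
          subst hz'
          exact hstrip z0.2 T (by rw [hCw]; congr 1; exact Prod.ext hzy rfl)
      set C := c.toWord with hCdef
      set F := invRev C ++ (y, true) :: C with hFdef
      have hredC : IsRed C := isRed_toWord c
      have hFred : IsRed F := isRed_F hhead
      have hmkF : mk F = c⁻¹ * of y * c := mk_F_eq y c
      have hmeast : mu t + t.length ≤ n := by
        rw [mu_cons] at hl
        simp only [List.length_cons] at hl
        omega
      obtain ⟨l'', hlen'', hpm'', hmu'', hch''⟩ := ih t hmeast
      rcases l'' with _ | ⟨⟨x, d⟩, t₂⟩
      · -- the tail is trivial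
        have ht : t = [] := List.length_eq_zero_iff.1 (by simpa using hlen''.symm)
        subst ht
        have hpmt : pm ((y, c) :: ([] : List (α × FreeGroup α))) = mk F := by
          rw [pm_cons, pm_nil, mul_one, hmkF]
        refine ⟨[(y, c)], rfl, rfl, le_refl _, ?_⟩
        rw [hpmt, toWord_mk_isRed hFred]
        refine ⟨invRev C, C, [], by simp [hFdef], ?_, ?_, rfl⟩
        · rw [← inv_mk, mk_toWord, inv_inv, mul_one]
        · rw [mk_toWord]; group
      · -- nontrivial tail; cancellation analysis
        obtain ⟨U₁, A₁, W₂, hV, hd, hch₂⟩ := hch''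
        rw [mul_one] at hd
        set V := (pm t).toWord with hVdef
        have hVred : IsRed V := isRed_toWord _
        obtain ⟨F₁, r, V₁, hFdec, hVdec, hred₁⟩ :=
          cancel_lemma F.length F V le_rfl hFred hVred
        have hmkV : mk V = pm t := mk_toWord
        have hw : pm ((y, c) :: t) = mk (F₁ ++ V₁) := by
          have h5 : mk F = mk F₁ * mk r := by rw [hFdec, mul_mk]
          have h6 : mk V = (mk r)⁻¹ * mk V₁ := by rw [hVdec, ← mul_mk, ← inv_mk]
          rw [pm_cons, ← hmkF, ← hmkV, h5, h6, ← mul_mk]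
          group
        have hwt : (pm ((y, c) :: t)).toWord = F₁ ++ V₁ := by
          rw [hw, toWord_mk_isRed hred₁]
        have hnormc : FreeGroup.norm c = C.length := rfl
        have hlenF : F₁.length + r.length = C.length + 1 + C.length := by
          have := congrArg List.length hFdec
          rw [hFdef] at this
          simp only [List.length_append, List.length_cons, List.length_nil, invRev_length] at this
          omega
        have hU₁red : IsRed U₁ := isRed_append_left (by rw [← hV]; exact hVred)
        have hnormd : FreeGroup.norm d = U₁.length := by
          rw [hd, FreeGroup.norm_inv_eq, norm_mk_isRed hU₁red]
        by_cases hr1 : r.length ≤ C.length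
        · -- r is a suffix of C
          obtain ⟨C₁, hF₁, hC⟩ : ∃ C₁, F₁ = (invRev C ++ [(y, true)]) ++ C₁ ∧ C = C₁ ++ r := by
            apply append_split
            · rw [← hFdec, hFdef]; simp
            · simp only [List.length_append, List.length_cons, List.length_nil, invRev_length]
              omega
          have hlenC₁ : C₁.length + r.length = C.length := by
            have := congrArg List.length hC; simp at this; omega
          by_cases hr2 : r.length ≤ U₁.length
          · -- CASE A : no Hurwitz move needed
            obtain ⟨U₁', hU₁, hV₁⟩ :
                ∃ U₁', U₁ = invRev r ++ U₁' ∧ V₁ = U₁' ++ (x, true) :: (A₁ ++ W₂) := by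
              apply append_split
              · rw [← hVdec, hV]
              · simp only [invRev_length]; omega
            have hmkr : (mk C₁)⁻¹ * c = mk r := by
              have : c = mk C₁ * mk r := by
                conv_lhs => rw [← mk_toWord (x := c)]
                rw [← hCdef, hC, mul_mk]
              rw [this]; group
            refine ⟨(y, c) :: (x, d) :: t₂, by simpa using hlen'', ?_, ?_, ?_⟩
            · rw [pm_cons y c ((x, d) :: t₂), pm_cons x d t₂, pm_cons y c t, ← hpm'',
                pm_cons x d t₂]
            · simp only [mu_cons] at hmu'' ⊢
              omega
            · rw [hwt]
              refine ⟨invRev C, C₁, V₁, ?_, ?_, ?_⟩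
              · rw [hF₁]; simp
              · rw [← inv_mk, mk_toWord, inv_inv, mul_one]
              · refine ⟨U₁', A₁, W₂, hV₁, ?_, hch₂⟩
                have h7 : mk U₁ = (mk r)⁻¹ * mk U₁' := by
                  rw [hU₁, ← mul_mk, ← inv_mk]
                rw [hmkr, hd, h7]; group
          · -- CASE C : Hurwitz move, conjugator shrinks
            push_neg at hr2
            obtain ⟨Z, hinvr, _⟩ :
                ∃ Z, invRev r = (U₁ ++ [(x, true)]) ++ Z ∧ A₁ ++ W₂ = Z ++ V₁ := by
              apply append_split
              · rw [List.append_assoc, List.singleton_append, ← hV, hVdec]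
              · simp only [List.length_append, List.length_cons, List.length_nil, invRev_length]
                omega
            have hr : r = invRev Z ++ ([(x, false)] ++ invRev U₁) := by
              rw [← invRev_invRev (L₁ := r), hinvr, invRev_append, invRev_append]
              norm_num [invRev]
            have hlenZ : Z.length + (U₁.length + 1) = r.length := by
              have := congrArg List.length hinvr
              simp only [List.length_append, List.length_cons, List.length_nil, invRev_length] at this
              omega
            have hceq : c = mk C₁ * ((mk Z)⁻¹ * ((of x)⁻¹ * d)) := by
              conv_lhs => rw [← mk_toWord (x := c)]
              rw [← hCdef, hC, hr, hd]
              rw [← mul_mk, ← mul_mk, ← mul_mk, mk_single_false, ← inv_mk, ← inv_mk]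
            set c' := c * d⁻¹ * of x * d with hc'def
            have hc' : c' = mk C₁ * (mk Z)⁻¹ * d := by
              rw [hc'def, hceq]; group
            have hnormc' : FreeGroup.norm c' + 1 ≤ C.length := by
              have h9 : FreeGroup.norm c' ≤ FreeGroup.norm (mk C₁) +
                  FreeGroup.norm (mk Z)⁻¹ + FreeGroup.norm d := by
                calc FreeGroup.norm c' ≤ FreeGroup.norm (mk C₁ * (mk Z)⁻¹) + FreeGroup.norm d := by
                      rw [hc']; exact FreeGroup.norm_mul_le _ _
                  _ ≤ _ := by
                      have := FreeGroup.norm_mul_le (mk C₁) (mk Z)⁻¹; omega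
              have h10 := FreeGroup.norm_mk_le (L₁ := C₁)
              have h11 : FreeGroup.norm (mk Z)⁻¹ ≤ Z.length := by
                rw [FreeGroup.norm_inv_eq]; exact FreeGroup.norm_mk_le
              omega
            -- recurse on the Hurwitz-moved list
            have hpmL₂ : pm ((x, d) :: (y, c') :: t₂) = pm ((y, c) :: t) := by
              rw [pm_cons x d ((y, c') :: t₂), pm_cons y c' t₂, pm_cons y c t, ← hpm'',
                pm_cons x d t₂, hc'def]
              group
            have hmeasL₂ : mu ((x, d) :: (y, c') :: t₂) + ((x, d) :: (y, c') :: t₂).length ≤ n := by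
              simp only [mu_cons] at hl hmu'' ⊢
              simp only [List.length_cons] at hl ⊢
              have : t₂.length + 1 = t.length := by
                have := hlen''; simpa using this
              omega
            obtain ⟨l', k1, k2, k3, k4⟩ := ih _ hmeasL₂
            refine ⟨l', ?_, by rw [k2, hpmL₂], ?_, by rwa [hpmL₂] at k4⟩
            · rw [k1]
              simp only [List.length_cons]
              have := hlen''; simp at this; omega
            · simp only [mu_cons] at k3 hmu'' ⊢
              omega
        · -- r eats the central letter `y`
          push_neg at hr1
          obtain ⟨r₀, hinvC, hr⟩ : ∃ r₀, invRev C = F₁ ++ r₀ ∧ r = r₀ ++ ((y, true) :: C) := by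
            apply append_split
            · rw [← hFdec, hFdef]
            · simp only [invRev_length]; omega
          have hVform : V = (invRev C ++ [(y, false)]) ++ (invRev r₀ ++ V₁) := by
            rw [hVdec, hr, invRev_append, invRev_cons]
            simp [invRev_append]
          rcases lt_trichotomy C.length U₁.length with hcu | hcu | hcu
          · -- CASE B1 : Hurwitz move on the other side
            obtain ⟨U₁'', hU₁'', _⟩ : ∃ U₁'', U₁ = (invRev C ++ [(y, false)]) ++ U₁'' ∧
                invRev r₀ ++ V₁ = U₁'' ++ ((x, true) :: (A₁ ++ W₂)) := by
              apply append_split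
              · rw [← hV, hVform]
              · simp only [List.length_append, List.length_cons, List.length_nil, invRev_length]; omega
            have hdeq : d = (mk U₁'')⁻¹ * (of y * c) := by
              rw [hd, hU₁'', ← mul_mk, ← mul_mk, mk_single_false, ← inv_mk, hCdef, mk_toWord]
              group
            set d' := d * (c⁻¹ * (of y)⁻¹ * c) with hd'def
            have hd' : d' = (mk U₁'')⁻¹ * c := by rw [hd'def, hdeq]; group
            have hlenU₁'' : U₁''.length + (C.length + 1) = U₁.length := by
              have := congrArg List.length hU₁''
              simp only [List.length_append, List.length_cons, List.length_nil, invRev_length] at this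
              omega
            have hnormd' : FreeGroup.norm d' + 1 ≤ U₁.length := by
              have h9 : FreeGroup.norm d' ≤ FreeGroup.norm (mk U₁'')⁻¹ + FreeGroup.norm c := by
                rw [hd']; exact FreeGroup.norm_mul_le _ _
              have h10 : FreeGroup.norm (mk U₁'')⁻¹ ≤ U₁''.length := by
                rw [FreeGroup.norm_inv_eq]; exact FreeGroup.norm_mk_le
              omega
            have hpmL₂ : pm ((x, d') :: (y, c) :: t₂) = pm ((y, c) :: t) := by
              rw [pm_cons x d' ((y, c) :: t₂), pm_cons y c t₂, pm_cons y c t, ← hpm'',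
                pm_cons x d t₂, hd'def]
              group
            have hmeasL₂ : mu ((x, d') :: (y, c) :: t₂) + ((x, d') :: (y, c) :: t₂).length ≤ n := by
              simp only [mu_cons] at hl hmu'' ⊢
              simp only [List.length_cons] at hl ⊢
              have : t₂.length + 1 = t.length := by
                have := hlen''; simpa using this
              omega
            obtain ⟨l', k1, k2, k3, k4⟩ := ih _ hmeasL₂
            refine ⟨l', ?_, by rw [k2, hpmL₂], ?_, by rwa [hpmL₂] at k4⟩
            · rw [k1]
              simp only [List.length_cons]
              have := hlen''; simp at this; omega
            · simp only [mu_cons] at k3 hmu'' ⊢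
              omega
          · -- impossible : the central letters clash
            exfalso
            have h12 : invRev C ++ ((y, false) :: (invRev r₀ ++ V₁))
                = U₁ ++ ((x, true) :: (A₁ ++ W₂)) := by
              rw [← hV, hVform]; simp
            have h13 := List.append_inj h12 (by simp [hcu])
            obtain ⟨-, h14⟩ := h13
            simp only [List.cons.injEq, Prod.mk.injEq] at h14
            exact Bool.false_ne_true h14.1.2
          · -- CASE B2 : Hurwitz move, conjugator shrinks
            obtain ⟨Z₂, hinvC₂, _⟩ : ∃ Z₂, invRev C = (U₁ ++ [(x, true)]) ++ Z₂ ∧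
                A₁ ++ W₂ = Z₂ ++ ((y, false) :: (invRev r₀ ++ V₁)) := by
              apply append_split
              · rw [List.append_assoc, List.singleton_append, ← hV, hVform]
                simp
              · simp only [List.length_append, List.length_cons, List.length_nil, invRev_length]; omega
            have hCeq : C = invRev Z₂ ++ ([(x, false)] ++ invRev U₁) := by
              rw [← invRev_invRev (L₁ := C), hinvC₂, invRev_append, invRev_append]
              norm_num [invRev]
            have hlenZ₂ : Z₂.length + (U₁.length + 1) = C.length := by
              have := congrArg List.length hinvC₂
              simp only [List.length_append, List.length_cons, List.length_nil, invRev_length] at this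
              omega
            have hceq : c = (mk Z₂)⁻¹ * ((of x)⁻¹ * d) := by
              conv_lhs => rw [← mk_toWord (x := c)]
              rw [← hCdef, hCeq, hd]
              rw [← mul_mk, ← mul_mk, mk_single_false, ← inv_mk, ← inv_mk]
            set c' := c * d⁻¹ * of x * d with hc'def
            have hc' : c' = (mk Z₂)⁻¹ * d := by rw [hc'def, hceq]; group
            have hnormc' : FreeGroup.norm c' + 1 ≤ C.length := by
              have h9 : FreeGroup.norm c' ≤ FreeGroup.norm (mk Z₂)⁻¹ + FreeGroup.norm d := by
                rw [hc']; exact FreeGroup.norm_mul_le _ _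
              have h10 : FreeGroup.norm (mk Z₂)⁻¹ ≤ Z₂.length := by
                rw [FreeGroup.norm_inv_eq]; exact FreeGroup.norm_mk_le
              omega
            have hpmL₂ : pm ((x, d) :: (y, c') :: t₂) = pm ((y, c) :: t) := by
              rw [pm_cons x d ((y, c') :: t₂), pm_cons y c' t₂, pm_cons y c t, ← hpm'',
                pm_cons x d t₂, hc'def]
              group
            have hmeasL₂ : mu ((x, d) :: (y, c') :: t₂) + ((x, d) :: (y, c') :: t₂).length ≤ n := by
              simp only [mu_cons] at hl hmu'' ⊢
              simp only [List.length_cons] at hl ⊢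
              have : t₂.length + 1 = t.length := by
                have := hlen''; simpa using this
              omega
            obtain ⟨l', k1, k2, k3, k4⟩ := ih _ hmeasL₂
            refine ⟨l', ?_, by rw [k2, hpmL₂], ?_, by rwa [hpmL₂] at k4⟩
            · rw [k1]
              simp only [List.length_cons]
              have := hlen''; simp at this; omega
            · simp only [mu_cons] at k3 hmu'' ⊢
              omega
end QP

lemma theta_sum {α : Type*} [Fintype α] [DecidableEq α] (l : List (α × FreeGroup α)) :
    ∑ x : α, Multiplicative.toAdd (Theta (QP.pm l)) x = (l.length : ℤ) := by
  induction l with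
  | nil =>
    rw [QP.pm_nil, map_one]
    simp
  | cons p t ih =>
    obtain ⟨x, c⟩ := p
    rw [QP.pm_cons]
    have hconj : ∀ a b : Multiplicative (α → ℤ), a⁻¹ * b * a = b := fun a b => by
      rw [mul_comm (a⁻¹ * b) a, mul_inv_cancel_left]
    have hof : Theta (FreeGroup.of x) = Multiplicative.ofAdd (Pi.single x 1) :=
      FreeGroup.lift_apply_of
    have hsplit : Theta (c⁻¹ * FreeGroup.of x * c * QP.pm t)
        = Multiplicative.ofAdd (Pi.single x 1) * Theta (QP.pm t) := by
      rw [map_mul, map_mul, map_mul, map_inv, hconj, hof]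
    rw [hsplit]
    simp only [toAdd_mul, Pi.add_apply, toAdd_ofAdd]
    rw [Finset.sum_add_distrib, ih, Finset.sum_pi_single']
    simp
    omega

theorem quasiPositive_bounded_conjugators {X : Type*} [Fintype X] [DecidableEq X]
    (w : FreeGroup X) (hw : QuasiPositive w) :
    ∃ l : List (X × FreeGroup X),
      (l.length : ℤ) = ∑ x : X, Multiplicative.toAdd (Theta w) x ∧
      w = (l.map fun p => p.2⁻¹ * FreeGroup.of p.1 * p.2).prod ∧
      ∀ p ∈ l, 2 * (FreeGroup.norm p.2 : ℤ) ≤ (FreeGroup.norm w : ℤ) - l.length := by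
  obtain ⟨l₀, hl₀⟩ := hw
  obtain ⟨l, hlen, hpm, hmu, hch⟩ := QP.main (QP.mu l₀ + l₀.length) l₀ le_rfl
  have hw' : w = QP.pm l := by rw [hl₀]; exact hpm.symm
  refine ⟨l, ?_, hw', ?_⟩
  · rw [hw']
    exact (theta_sum l).symm
  · intro p hp
    have hb := QP.ch_bound l 1 (QP.pm l₀).toWord 0 hch (by simp) p hp
    have h2 : (FreeGroup.norm w : ℤ) = ((QP.pm l₀).toWord.length : ℤ) := by
      rw [hl₀]; rfl
    omega
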